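/- (Corollary 1, exact identity) Suppose e_{[k]1}=e_1 and f_{[k]}=f for all k=1,…,K (so π_{[k]}=Π_{[k]} and e_0=1−e_1). Then V_{ττ,C} − V_{ττ} = (N/(N−1))·Σ_{k=1}^K Π_{[k]} d_{[k]} − (1/(N−1))·Σ_{k=1}^K (1−Π_{[k]}) V_{[k]ττ}, where d_{[k]} = [ (e_0/e_1)^{1/2}(Ȳ_{[k]}(1)−Ȳ(1)) + (e_1/e_0)^{1/2}(Ȳ_{[k]}(0)−Ȳ(0)) ]² + (1−f)(τ_{[k]}−τ)² ≥ 0. -/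

import Mathlib

open MeasureTheory ProbabilityTheory Filter Matrix
open scoped ENNReal NNReal

noncomputable section

namespace SurveyExperiments

/-- The uniform probability measure on a finite set of outcomes. -/
def unif {α : Type*} [MeasurableSpace α] (s : Finset α) : Measure α :=
  (s.card : ℝ≥0∞)⁻¹ • ∑ a ∈ s, MeasureTheory.Measure.dirac a

/-- The covariance of two real-valued random variables. -/
def covRV {Ω : Type*} [MeasurableSpace Ω] (μ : Measure Ω) (f g : Ω → ℝ) : ℝ :=
  ∫ ω, (f ω - ∫ x, f x ∂μ) * (g ω - ∫ x, g x ∂μ) ∂μ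

/-- The total variation distance between two measures. -/
def dTV {α : Type*} [MeasurableSpace α] (P Q : Measure α) : ℝ :=
  ⨆ A : Set α, |(P A).toReal - (Q A).toReal|

/-- The standard Gaussian measure on `ℝ^J`. -/
def stdGaussianPi (J : ℕ) : Measure (Fin J → ℝ) := Measure.pi fun _ => gaussianReal 0 1

/-- The law `L_{J,a}` of the first coordinate of a standard Gaussian vector in `ℝ^J`
conditioned on the event that its squared norm is at most `a`. -/
def truncGaussian (J : ℕ) [NeZero J] (a : ℝ) : Measure ℝ :=
  Measure.map (fun x => x 0)
    (ProbabilityTheory.cond (stdGaussianPi J) {x | ∑ i, (x i) ^ 2 ≤ a})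

/-- `ν_{J,a}`, the variance of the truncated Gaussian `L_{J,a}`. -/
def nu (J : ℕ) [NeZero J] (a : ℝ) : ℝ := variance id (truncGaussian J a)

/-- The law of `√v (√(1-rW-rX) ε + √rW L_{J1,aS} + √rX L_{J2,aT})` with independent
`ε ~ N(0,1)`, `L_{J1,aS}`, `L_{J2,aT}`. -/
def rrLimitLaw (v rW rX : ℝ) (J1 J2 : ℕ) [NeZero J1] [NeZero J2] (aS aT : ℝ) : Measure ℝ :=
  Measure.map
    (fun p : ℝ × ℝ × ℝ =>
      Real.sqrt v * (Real.sqrt (1 - rW - rX) * p.1 + Real.sqrt rW * p.2.1 + Real.sqrt rX * p.2.2))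
    ((gaussianReal 0 1).prod ((truncGaussian J1 aS).prod (truncGaussian J2 aT)))

/-- The `p`-th quantile of a measure on `ℝ`. -/
def quantile (μ : Measure ℝ) (p : ℝ) : ℝ := sInf {x : ℝ | ENNReal.ofReal p ≤ μ (Set.Iic x)}

/-- The data of a stratified (randomized survey) experiment: a population of `N` units
partitioned into `K` strata by `st`, with `nk k` units sampled and `nk1 k` sampled units
treated in stratum `k`. -/
structure SRSE where
  K : ℕ
  N : ℕ
  st : Fin N → Fin K
  nk : Fin K → ℕ
  nk1 : Fin K → ℕ

namespace SRSE

variable (E : SRSE)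

def stratum (k : Fin E.K) : Finset (Fin E.N) := Finset.univ.filter fun i => E.st i = k
def Nk (k : Fin E.K) : ℕ := (E.stratum k).card
def nk0 (k : Fin E.K) : ℕ := E.nk k - E.nk1 k
def n : ℕ := ∑ k, E.nk k
def Pi (k : Fin E.K) : ℝ := (E.Nk k : ℝ) / (E.N : ℝ)
def pik (k : Fin E.K) : ℝ := (E.nk k : ℝ) / (E.n : ℝ)
def fk (k : Fin E.K) : ℝ := (E.nk k : ℝ) / (E.Nk k : ℝ)
def f : ℝ := (E.n : ℝ) / (E.N : ℝ)
def e1 (k : Fin E.K) : ℝ := (E.nk1 k : ℝ) / (E.nk k : ℝ)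
def e0 (k : Fin E.K) : ℝ := (E.nk0 k : ℝ) / (E.nk k : ℝ)

/-- Sample space: a pair of sampling indicators and treatment indicators. -/
abbrev Omega := (Fin E.N → Bool) × (Fin E.N → Bool)

/-- The attainable pairs of indicators: `nk k` sampled and `nk1 k` treated units in each
stratum `k`, with treated units sampled. -/
def valid : Finset E.Omega :=
  Finset.univ.filter fun ω =>
    (∀ k, ((E.stratum k).filter fun i => ω.1 i = true).card = E.nk k) ∧
    (∀ k, ((E.stratum k).filter fun i => ω.1 i = true ∧ ω.2 i = true).card = E.nk1 k) ∧
    (∀ i, ω.2 i = true → ω.1 i = true)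

/-- The stratified randomized survey experiment (SRSE) design: stratified random sampling
without replacement followed by stratified randomization, i.e. the uniform distribution over
all attainable pairs of indicator vectors. -/
def P : Measure E.Omega := unif E.valid

def Z (ω : E.Omega) (i : Fin E.N) : ℝ := if ω.1 i then 1 else 0
def T (ω : E.Omega) (i : Fin E.N) : ℝ := if ω.2 i then 1 else 0

def meanK (a : Fin E.N → ℝ) (k : Fin E.K) : ℝ := (∑ i ∈ E.stratum k, a i) / (E.Nk k : ℝ)
def covK (a b : Fin E.N → ℝ) (k : Fin E.K) : ℝ :=
  (∑ i ∈ E.stratum k, (a i - E.meanK a k) * (b i - E.meanK b k)) / ((E.Nk k : ℝ) - 1)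
def meanAll (a : Fin E.N → ℝ) : ℝ := (∑ i, a i) / (E.N : ℝ)
def varAll (a : Fin E.N → ℝ) : ℝ := (∑ i, (a i - E.meanAll a) ^ 2) / ((E.N : ℝ) - 1)

def mean1 (a : Fin E.N → ℝ) (k : Fin E.K) (ω : E.Omega) : ℝ :=
  (∑ i ∈ E.stratum k, E.Z ω i * E.T ω i * a i) / (E.nk1 k : ℝ)
def mean0 (a : Fin E.N → ℝ) (k : Fin E.K) (ω : E.Omega) : ℝ :=
  (∑ i ∈ E.stratum k, E.Z ω i * (1 - E.T ω i) * a i) / (E.nk0 k : ℝ)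
def meanS (a : Fin E.N → ℝ) (k : Fin E.K) (ω : E.Omega) : ℝ :=
  (∑ i ∈ E.stratum k, E.Z ω i * a i) / (E.nk k : ℝ)

/-- The stratified difference-in-means estimator. -/
def hatTau (Y1 Y0 : Fin E.N → ℝ) (ω : E.Omega) : ℝ :=
  ∑ k, E.Pi k * (E.mean1 Y1 k ω - E.mean0 Y0 k ω)
/-- The finite-population average treatment effect. -/
def tau (Y1 Y0 : Fin E.N → ℝ) : ℝ := ∑ k, E.Pi k * (E.meanK Y1 k - E.meanK Y0 k)
/-- The treated/control covariate-mean-difference `τ̂_X`. -/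
def hatTauX {J : ℕ} (X : Fin E.N → Fin J → ℝ) (ω : E.Omega) : Fin J → ℝ := fun j =>
  ∑ k, E.Pi k * (E.mean1 (fun i => X i j) k ω - E.mean0 (fun i => X i j) k ω)
/-- The sampled/population covariate-mean-difference `δ̂_W`. -/
def hatDeltaW {J : ℕ} (W : Fin E.N → Fin J → ℝ) (ω : E.Omega) : Fin J → ℝ := fun j =>
  ∑ k, E.Pi k * (E.meanS (fun i => W i j) k ω - E.meanK (fun i => W i j) k)

def sCov1 (a b : Fin E.N → ℝ) (k : Fin E.K) (ω : E.Omega) : ℝ :=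
  (∑ i ∈ E.stratum k, E.Z ω i * E.T ω i * (a i - E.mean1 a k ω) * (b i - E.mean1 b k ω)) /
    ((E.nk1 k : ℝ) - 1)
def sCov0 (a b : Fin E.N → ℝ) (k : Fin E.K) (ω : E.Omega) : ℝ :=
  (∑ i ∈ E.stratum k, E.Z ω i * (1 - E.T ω i) * (a i - E.mean0 a k ω) * (b i - E.mean0 b k ω)) /
    ((E.nk0 k : ℝ) - 1)
def sCovS (a b : Fin E.N → ℝ) (k : Fin E.K) (ω : E.Omega) : ℝ :=
  (∑ i ∈ E.stratum k, E.Z ω i * (a i - E.meanS a k ω) * (b i - E.meanS b k ω)) /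
    ((E.nk k : ℝ) - 1)

/-- The `(τ,τ)` entry of the covariance matrix `V`. -/
def Vtt (Y1 Y0 : Fin E.N → ℝ) : ℝ :=
  ∑ k, (E.Pi k) ^ 2 / E.pik k *
    (E.covK Y1 Y1 k / E.e1 k + E.covK Y0 Y0 k / E.e0 k -
      E.fk k * E.covK (fun i => Y1 i - Y0 i) (fun i => Y1 i - Y0 i) k)
/-- The `(τ,X)` block of `V`. -/
def VtX {J : ℕ} (Y1 Y0 : Fin E.N → ℝ) (X : Fin E.N → Fin J → ℝ) : Fin J → ℝ := fun j =>
  ∑ k, (E.Pi k) ^ 2 / E.pik k *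
    (E.covK (fun i => X i j) Y1 k / E.e1 k + E.covK (fun i => X i j) Y0 k / E.e0 k)
/-- The `(τ,W)` block of `V`. -/
def VtW {J : ℕ} (Y1 Y0 : Fin E.N → ℝ) (W : Fin E.N → Fin J → ℝ) : Fin J → ℝ := fun j =>
  ∑ k, (E.Pi k) ^ 2 / E.pik k *
    ((1 - E.fk k) * E.covK (fun i => W i j) (fun i => Y1 i - Y0 i) k)
/-- The `(X,X)` block of `V`. -/
def VXX {J : ℕ} (X : Fin E.N → Fin J → ℝ) : Matrix (Fin J) (Fin J) ℝ :=
  Matrix.of fun j j' =>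
    ∑ k, (E.Pi k) ^ 2 / E.pik k *
      (E.covK (fun i => X i j) (fun i => X i j') k / (E.e1 k * E.e0 k))
/-- The `(W,W)` block of `V`. -/
def VWW {J : ℕ} (W : Fin E.N → Fin J → ℝ) : Matrix (Fin J) (Fin J) ℝ :=
  Matrix.of fun j j' =>
    ∑ k, (E.Pi k) ^ 2 / E.pik k *
      ((1 - E.fk k) * E.covK (fun i => W i j) (fun i => W i j') k)

/-- The covariance matrix of `δ̂_W` under stratified random sampling. -/
def covWSampling {J : ℕ} (W : Fin E.N → Fin J → ℝ) : Matrix (Fin J) (Fin J) ℝ :=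
  Matrix.of fun j j' =>
    ∑ k, (E.Pi k) ^ 2 * ((E.nk k : ℝ)⁻¹ - (E.Nk k : ℝ)⁻¹) *
      E.covK (fun i => W i j) (fun i => W i j') k
/-- The Mahalanobis sampling-balance criterion `M_S`. -/
def MS {J : ℕ} (W : Fin E.N → Fin J → ℝ) (ω : E.Omega) : ℝ :=
  E.hatDeltaW W ω ⬝ᵥ ((E.covWSampling W)⁻¹ *ᵥ E.hatDeltaW W ω)
/-- The conditional covariance matrix of `τ̂_X` given the sample. -/
def covXAssign {J : ℕ} (X : Fin E.N → Fin J → ℝ) (ω : E.Omega) : Matrix (Fin J) (Fin J) ℝ :=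
  Matrix.of fun j j' =>
    ∑ k, (E.Pi k) ^ 2 * ((E.nk k : ℝ) / ((E.nk1 k : ℝ) * (E.nk0 k : ℝ))) *
      E.sCovS (fun i => X i j) (fun i => X i j') k ω
/-- The Mahalanobis assignment-balance criterion `M_T`. -/
def MT {J : ℕ} (X : Fin E.N → Fin J → ℝ) (ω : E.Omega) : ℝ :=
  E.hatTauX X ω ⬝ᵥ ((E.covXAssign X ω)⁻¹ *ᵥ E.hatTauX X ω)
/-- The acceptance event `{M_S ≤ a_S, M_T ≤ a_T}`. -/
def accept {J1 J2 : ℕ} (W : Fin E.N → Fin J1 → ℝ) (X : Fin E.N → Fin J2 → ℝ) (aS aT : ℝ) :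
    Set E.Omega := {ω | E.MS W ω ≤ aS ∧ E.MT X ω ≤ aT}

/-- The SRSRR design: the SRSE design conditioned on acceptance of both balance criteria. -/
def Prr {J1 J2 : ℕ} (W : Fin E.N → Fin J1 → ℝ) (X : Fin E.N → Fin J2 → ℝ) (aS aT : ℝ) :
    Measure E.Omega := ProbabilityTheory.cond E.P (E.accept W X aS aT)

/-- The conservative variance estimator `V̂_ττ`. -/
def hatVtt (Y1 Y0 : Fin E.N → ℝ) (ω : E.Omega) : ℝ :=
  ∑ k, (E.Pi k) ^ 2 / E.pik k * (E.sCov1 Y1 Y1 k ω / E.e1 k + E.sCov0 Y0 Y0 k ω / E.e0 k)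
/-- The estimator `V̂_τX`. -/
def hatVtX {J : ℕ} (Y1 Y0 : Fin E.N → ℝ) (X : Fin E.N → Fin J → ℝ) (ω : E.Omega) : Fin J → ℝ :=
  fun j => ∑ k, (E.Pi k) ^ 2 / E.pik k *
    (E.sCov1 (fun i => X i j) Y1 k ω / E.e1 k + E.sCov0 (fun i => X i j) Y0 k ω / E.e0 k)
/-- The estimator `V̂_τW`. -/
def hatVtW {J : ℕ} (Y1 Y0 : Fin E.N → ℝ) (W : Fin E.N → Fin J → ℝ) (ω : E.Omega) : Fin J → ℝ :=
  fun j => ∑ k, (E.Pi k) ^ 2 / E.pik k *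
    ((1 - E.fk k) * (E.sCov1 (fun i => W i j) Y1 k ω - E.sCov0 (fun i => W i j) Y0 k ω))
/-- The estimator `V̂_XX`. -/
def hatVXX {J : ℕ} (X : Fin E.N → Fin J → ℝ) (ω : E.Omega) : Matrix (Fin J) (Fin J) ℝ :=
  Matrix.of fun j j' => ∑ k, (E.Pi k) ^ 2 / E.pik k *
    (E.sCovS (fun i => X i j) (fun i => X i j') k ω / (E.e1 k * E.e0 k))
/-- The plug-in estimator `R̂²_W` (also used for `R̂²_E` with analysis-stage covariates). -/
def hatRW2 {J : ℕ} (Y1 Y0 : Fin E.N → ℝ) (W : Fin E.N → Fin J → ℝ) (ω : E.Omega) : ℝ :=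
  (E.hatVtW Y1 Y0 W ω ⬝ᵥ ((E.VWW W)⁻¹ *ᵥ E.hatVtW Y1 Y0 W ω)) / E.hatVtt Y1 Y0 ω
/-- The plug-in estimator `R̂²_X` (also used for `R̂²_C` with analysis-stage covariates). -/
def hatRX2 {J : ℕ} (Y1 Y0 : Fin E.N → ℝ) (X : Fin E.N → Fin J → ℝ) (ω : E.Omega) : ℝ :=
  (E.hatVtX Y1 Y0 X ω ⬝ᵥ ((E.hatVXX X ω)⁻¹ *ᵥ E.hatVtX Y1 Y0 X ω)) / E.hatVtt Y1 Y0 ω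

/-- The estimated regression-adjustment coefficient `β̂`. -/
def hatBeta {J : ℕ} (Y1 Y0 : Fin E.N → ℝ) (C : Fin E.N → Fin J → ℝ) (ω : E.Omega) : Fin J → ℝ :=
  (E.hatVXX C ω)⁻¹ *ᵥ E.hatVtX Y1 Y0 C ω
/-- The estimated regression-adjustment coefficient `γ̂`. -/
def hatGamma {J : ℕ} (Y1 Y0 : Fin E.N → ℝ) (Ecov : Fin E.N → Fin J → ℝ) (ω : E.Omega) :
    Fin J → ℝ :=
  (E.VWW Ecov)⁻¹ *ᵥ E.hatVtW Y1 Y0 Ecov ω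
/-- The regression-adjusted estimator `τ̂_adj = τ̂ - β̂ᵀτ̂_C - γ̂ᵀδ̂_E`. -/
def hatTauAdj {J3 J4 : ℕ} (Y1 Y0 : Fin E.N → ℝ) (C : Fin E.N → Fin J4 → ℝ)
    (Ecov : Fin E.N → Fin J3 → ℝ) (ω : E.Omega) : ℝ :=
  E.hatTau Y1 Y0 ω - E.hatBeta Y1 Y0 C ω ⬝ᵥ E.hatTauX C ω -
    E.hatGamma Y1 Y0 Ecov ω ⬝ᵥ E.hatDeltaW Ecov ω

/-- The vector stratified difference-in-means estimator `τ̂_R`. -/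
def hatTauVec {d : ℕ} (R1 R0 : Fin E.N → Fin d → ℝ) (ω : E.Omega) : Fin d → ℝ := fun j =>
  ∑ k, E.Pi k * (E.mean1 (fun i => R1 i j) k ω - E.mean0 (fun i => R0 i j) k ω)
/-- The vector estimand `τ_R`. -/
def tauVec {d : ℕ} (R1 R0 : Fin E.N → Fin d → ℝ) : Fin d → ℝ := fun j =>
  ∑ k, E.Pi k * (E.meanK (fun i => R1 i j) k - E.meanK (fun i => R0 i j) k)
/-- The covariance matrix `V_R` of `√n (τ̂_R - τ_R)`. -/
def VRmat {d : ℕ} (R1 R0 : Fin E.N → Fin d → ℝ) : Matrix (Fin d) (Fin d) ℝ :=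
  Matrix.of fun j j' =>
    ∑ k, (E.Pi k) ^ 2 / E.pik k *
      (E.covK (fun i => R1 i j) (fun i => R1 i j') k / E.e1 k +
        E.covK (fun i => R0 i j) (fun i => R0 i j') k / E.e0 k -
        E.fk k * E.covK (fun i => R1 i j - R0 i j) (fun i => R1 i j' - R0 i j') k)

/-- The attainable sampling vectors. -/
def validZ : Finset (Fin E.N → Bool) :=
  Finset.univ.filter fun z => ∀ k, ((E.stratum k).filter fun i => z i = true).card = E.nk k
/-- Stratified random sampling without replacement: the uniform distribution over attainable
sampling vectors. -/
def Psamp : Measure (Fin E.N → Bool) := unif E.validZ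
/-- `δ̂_W` as a function of the sampling vector alone. -/
def deltaWz {J : ℕ} (W : Fin E.N → Fin J → ℝ) (z : Fin E.N → Bool) : Fin J → ℝ := fun j =>
  ∑ k, E.Pi k *
    ((∑ i ∈ E.stratum k, (if z i then (1 : ℝ) else 0) * W i j) / (E.nk k : ℝ) -
      E.meanK (fun i => W i j) k)

/-- The attainable treatment-assignment vectors given the sampling vector `z`. -/
def validT (z : Fin E.N → Bool) : Finset (Fin E.N → Bool) :=
  Finset.univ.filter fun t =>
    (∀ k, ((E.stratum k).filter fun i => z i = true ∧ t i = true).card = E.nk1 k) ∧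
    (∀ i, t i = true → z i = true)
/-- Stratified randomization of the sampled units, conditionally on the sampling vector `z`. -/
def Pgiven (z : Fin E.N → Bool) : Measure E.Omega :=
  unif ((E.validT z).image fun t => (z, t))

/-- `M_S` as a function of the sampling vector alone. -/
def MSz {J : ℕ} (W : Fin E.N → Fin J → ℝ) (z : Fin E.N → Bool) : ℝ := E.MS W (z, z)
/-- The acceptable sampling vectors. -/
def acceptZ {J : ℕ} (W : Fin E.N → Fin J → ℝ) (aS : ℝ) : Finset (Fin E.N → Bool) :=
  E.validZ.filter fun z => E.MSz W z ≤ aS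
/-- The acceptable assignment vectors given a sampling vector `z`. -/
def acceptT {J : ℕ} (X : Fin E.N → Fin J → ℝ) (aT : ℝ) (z : Fin E.N → Bool) :
    Finset (Fin E.N → Bool) := (E.validT z).filter fun t => E.MT X (z, t) ≤ aT
/-- The set `M` of jointly acceptable pairs. -/
def acceptedPairs {J1 J2 : ℕ} (W : Fin E.N → Fin J1 → ℝ) (X : Fin E.N → Fin J2 → ℝ)
    (aS aT : ℝ) : Finset E.Omega :=
  E.valid.filter fun ω => E.MS W ω ≤ aS ∧ E.MT X ω ≤ aT
/-- The single-stage rejective design: uniform over jointly acceptable pairs. -/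
def singleStage {J1 J2 : ℕ} (W : Fin E.N → Fin J1 → ℝ) (X : Fin E.N → Fin J2 → ℝ)
    (aS aT : ℝ) : Measure E.Omega := unif (E.acceptedPairs W X aS aT)
/-- The two-stage rejective design: first a uniform acceptable sampling, then a uniform
acceptable assignment given the sampling. -/
def twoStage {J1 J2 : ℕ} (W : Fin E.N → Fin J1 → ℝ) (X : Fin E.N → Fin J2 → ℝ) (aS aT : ℝ) :
    Measure E.Omega :=
  ((E.acceptZ W aS).card : ℝ≥0∞)⁻¹ • ∑ z ∈ E.acceptZ W aS,
    (((E.acceptT X aT z).card : ℝ≥0∞)⁻¹ • ∑ t ∈ E.acceptT X aT z, Measure.dirac (z, t))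
/-- The conditional acceptance probability `P(M_T ≤ a_T ∣ Z = z)`. -/
def condAcceptProb {J : ℕ} (X : Fin E.N → Fin J → ℝ) (aT : ℝ) (z : Fin E.N → Bool) : ℝ :=
  ((E.acceptT X aT z).card : ℝ) / ((E.validT z).card : ℝ)

end SRSE

namespace SRSE

lemma meanK_sub' (E : SRSE) (a b : Fin E.N → ℝ) (k : Fin E.K) :
    E.meanK (fun i => a i - b i) k = E.meanK a k - E.meanK b k := by
  simp [meanK, Finset.sum_sub_distrib, sub_div]

lemma meanAll_sub' (E : SRSE) (a b : Fin E.N → ℝ) :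
    E.meanAll (fun i => a i - b i) = E.meanAll a - E.meanAll b := by
  simp [meanAll, Finset.sum_sub_distrib, sub_div]

lemma sum_center' (E : SRSE) (a : Fin E.N → ℝ) (k : Fin E.K) (hk : E.Nk k ≠ 0) :
    ∑ i ∈ E.stratum k, (a i - E.meanK a k) = 0 := by
  have h : (E.Nk k : ℝ) ≠ 0 := Nat.cast_ne_zero.mpr hk
  rw [Finset.sum_sub_distrib, Finset.sum_const, nsmul_eq_mul, meanK,
    show ((E.stratum k).card : ℝ) = (E.Nk k : ℝ) from rfl]
  field_simp
  ring

lemma sum_centered_mul' (E : SRSE) (a b : Fin E.N → ℝ) (k : Fin E.K) :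
    ∑ i ∈ E.stratum k, (a i - E.meanK a k) * (b i - E.meanK b k) =
      ((E.Nk k : ℝ) - 1) * E.covK a b k := by
  by_cases h1 : E.Nk k = 1
  · have h1' : (E.stratum k).card = 1 := h1
    obtain ⟨i0, hi0⟩ := Finset.card_eq_one.mp h1'
    have hma : E.meanK a k = a i0 := by
      simp [meanK, hi0, show (E.Nk k : ℝ) = 1 by exact_mod_cast h1]
    have hmb : E.meanK b k = b i0 := by
      simp [meanK, hi0, show (E.Nk k : ℝ) = 1 by exact_mod_cast h1]
    rw [hi0, Finset.sum_singleton, hma, hmb,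
      show (E.Nk k : ℝ) = 1 by exact_mod_cast h1]
    ring
  · have h : (E.Nk k : ℝ) - 1 ≠ 0 := by
      intro h
      exact h1 (by exact_mod_cast sub_eq_zero.mp h)
    rw [covK]
    field_simp

lemma stratum_expand' (E : SRSE) (a b : Fin E.N → ℝ) (k : Fin E.K) :
    ∑ i ∈ E.stratum k, (a i - E.meanAll a) * (b i - E.meanAll b) =
      ((E.Nk k : ℝ) - 1) * E.covK a b k +
        (E.Nk k : ℝ) * ((E.meanK a k - E.meanAll a) * (E.meanK b k - E.meanAll b)) := by
  by_cases h0 : E.Nk k = 0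
  · have hs : E.stratum k = ∅ := Finset.card_eq_zero.mp h0
    simp [hs, covK, meanK, show (E.Nk k : ℝ) = 0 by exact_mod_cast h0]
  · have key : ∀ i ∈ E.stratum k, (a i - E.meanAll a) * (b i - E.meanAll b) =
        (a i - E.meanK a k) * (b i - E.meanK b k)
        + (E.meanK a k - E.meanAll a) * (b i - E.meanK b k)
        + (a i - E.meanK a k) * (E.meanK b k - E.meanAll b)
        + (E.meanK a k - E.meanAll a) * (E.meanK b k - E.meanAll b) := by
      intro i _; ring
    rw [Finset.sum_congr rfl key, Finset.sum_add_distrib, Finset.sum_add_distrib,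
      Finset.sum_add_distrib, ← Finset.mul_sum, ← Finset.sum_mul,
      E.sum_center' a k h0, E.sum_center' b k h0, E.sum_centered_mul' a b k,
      Finset.sum_const, nsmul_eq_mul,
      show ((E.stratum k).card : ℝ) = (E.Nk k : ℝ) from rfl]
    ring

lemma varAll_eq' (E : SRSE) (a : Fin E.N → ℝ) :
    E.varAll a = (∑ k, (((E.Nk k : ℝ) - 1) * E.covK a a k +
      (E.Nk k : ℝ) * ((E.meanK a k - E.meanAll a) * (E.meanK a k - E.meanAll a)))) /
        ((E.N : ℝ) - 1) := by
  rw [varAll]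
  congr 1
  simp only [pow_two]
  rw [← Finset.sum_fiberwise Finset.univ E.st
    (fun i => (a i - E.meanAll a) * (a i - E.meanAll a))]
  exact Finset.sum_congr rfl fun k _ => E.stratum_expand' a a k

end SRSE


/-- Corollary 1, exact identity: with equal treated proportions `e₁` and
sampling proportions `f` across strata, the difference between the asymptotic variances of
the difference-in-means estimator under the completely randomized and the stratified
randomized survey experiments is
`V_ττ,C - V_ττ = N/(N-1) ∑ₖ Π_[k] d_[k] - (N-1)⁻¹ ∑ₖ (1-Π_[k]) V_[k]ττ`, with `d_[k] ≥ 0`. -/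
theorem statement4 (E : SurveyExperiments.SRSE) (hN : 2 ≤ E.N)
    (Y1 Y0 : Fin E.N → ℝ) (e1 f : ℝ)
    (he1 : 0 < e1) (he1' : e1 < 1) (hf : 0 < f) (hf1 : f ≤ 1) :
    let tauU : Fin E.N → ℝ := fun i => Y1 i - Y0 i
    let Vk : Fin E.K → ℝ := fun k =>
      E.covK Y1 Y1 k / e1 + E.covK Y0 Y0 k / (1 - e1) - f * E.covK tauU tauU k
    let d : Fin E.K → ℝ := fun k =>
      (Real.sqrt ((1 - e1) / e1) * (E.meanK Y1 k - E.meanAll Y1) +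
          Real.sqrt (e1 / (1 - e1)) * (E.meanK Y0 k - E.meanAll Y0)) ^ 2 +
        (1 - f) * (E.meanK tauU k - E.meanAll tauU) ^ 2
    ((E.varAll Y1 / e1 + E.varAll Y0 / (1 - e1) - f * E.varAll tauU) - ∑ k, E.Pi k * Vk k
        = (E.N : ℝ) / ((E.N : ℝ) - 1) * ∑ k, E.Pi k * d k -
            ((E.N : ℝ) - 1)⁻¹ * ∑ k, (1 - E.Pi k) * Vk k) ∧
      ∀ k, 0 ≤ d k := by
  intro tauU Vk d
  have hNR : (2:ℝ) ≤ (E.N:ℝ) := by exact_mod_cast hN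
  have hN1 : (E.N:ℝ) - 1 ≠ 0 := by nlinarith
  have hN0 : (E.N:ℝ) ≠ 0 := by nlinarith
  have he1n : e1 ≠ 0 := ne_of_gt he1
  have he0 : (0:ℝ) < 1 - e1 := by linarith
  have he0n : (1:ℝ) - e1 ≠ 0 := ne_of_gt he0
  have hVk : ∀ k, Vk k = E.covK Y1 Y1 k / e1 + E.covK Y0 Y0 k / (1 - e1) -
      f * E.covK tauU tauU k := fun k => rfl
  have hτ : ∀ k, E.meanK tauU k = E.meanK Y1 k - E.meanK Y0 k :=
    fun k => E.meanK_sub' Y1 Y0 k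
  have hτA : E.meanAll tauU = E.meanAll Y1 - E.meanAll Y0 := E.meanAll_sub' Y1 Y0
  have hdk : ∀ k, d k = (E.meanK Y1 k - E.meanAll Y1) ^ 2 / e1
      + (E.meanK Y0 k - E.meanAll Y0) ^ 2 / (1 - e1)
      - f * (E.meanK Y1 k - E.meanK Y0 k - (E.meanAll Y1 - E.meanAll Y0)) ^ 2 := by
    intro k
    have hd0 : d k = (Real.sqrt ((1 - e1) / e1) * (E.meanK Y1 k - E.meanAll Y1) +
          Real.sqrt (e1 / (1 - e1)) * (E.meanK Y0 k - E.meanAll Y0)) ^ 2 +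
        (1 - f) * (E.meanK tauU k - E.meanAll tauU) ^ 2 := rfl
    have h1 : Real.sqrt ((1 - e1) / e1) ^ 2 = (1 - e1) / e1 :=
      Real.sq_sqrt (div_nonneg (by linarith) he1.le)
    have h0 : Real.sqrt (e1 / (1 - e1)) ^ 2 = e1 / (1 - e1) :=
      Real.sq_sqrt (div_nonneg he1.le he0.le)
    have hp : Real.sqrt ((1 - e1) / e1) * Real.sqrt (e1 / (1 - e1)) = 1 := by
      rw [← Real.sqrt_mul (div_nonneg (by linarith) he1.le),
        show (1 - e1) / e1 * (e1 / (1 - e1)) = 1 by field_simp]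
      exact Real.sqrt_one
    rw [hd0, hτ k, hτA]
    set Δ1 := E.meanK Y1 k - E.meanAll Y1 with hΔ1
    set Δ0 := E.meanK Y0 k - E.meanAll Y0 with hΔ0
    have expand : (Real.sqrt ((1 - e1) / e1) * Δ1 + Real.sqrt (e1 / (1 - e1)) * Δ0) ^ 2
        = Real.sqrt ((1 - e1) / e1) ^ 2 * Δ1 ^ 2
          + 2 * (Real.sqrt ((1 - e1) / e1) * Real.sqrt (e1 / (1 - e1))) * (Δ1 * Δ0)
          + Real.sqrt (e1 / (1 - e1)) ^ 2 * Δ0 ^ 2 := by ring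
    have hsub : E.meanK Y1 k - E.meanK Y0 k - (E.meanAll Y1 - E.meanAll Y0)
        = Δ1 - Δ0 := by rw [hΔ1, hΔ0]; ring
    rw [expand, h1, h0, hp, hsub]
    field_simp
    ring
  constructor
  · simp only [hdk, hVk]
    rw [E.varAll_eq' Y1, E.varAll_eq' Y0, E.varAll_eq' tauU]
    simp only [hτ, hτA]
    rw [div_div, div_div, Finset.sum_div, Finset.sum_div, Finset.sum_div,
      Finset.mul_sum, Finset.mul_sum, Finset.mul_sum,
      ← Finset.sum_add_distrib, ← Finset.sum_sub_distrib, ← Finset.sum_sub_distrib,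
      ← Finset.sum_sub_distrib]
    refine Finset.sum_congr rfl fun k _ => ?_
    rw [show E.Pi k = (E.Nk k : ℝ) / (E.N : ℝ) from rfl]
    field_simp
    ring
  · intro k
    have hd0 : d k = (Real.sqrt ((1 - e1) / e1) * (E.meanK Y1 k - E.meanAll Y1) +
          Real.sqrt (e1 / (1 - e1)) * (E.meanK Y0 k - E.meanAll Y0)) ^ 2 +
        (1 - f) * (E.meanK tauU k - E.meanAll tauU) ^ 2 := rfl
    rw [hd0]
    have h1f : (0:ℝ) ≤ 1 - f := by linarith
    exact add_nonneg (sq_nonneg _) (mul_nonneg h1f (sq_nonneg _))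

end SurveyExperiments
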